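/- For Re(s) > 1 and real α, real c > 0, the partial derivative in c of the Lerch zeta function satisfies ∂/∂c [Σ_{n≥0} e^{2πinα}(n+c)^{-s}] = -s · Σ_{n≥0} e^{2πinα}(n+c)^{-s-1}, i.e., ∂ζ(α,c,s)/∂c = -s·ζ(α,c,s+1). -/

import Mathlib

open Complex Real

lemma lerch_aux_summable (a : ℝ) (ha : 0 < a) (p : ℝ) (hp : 1 < p) :
    Summable (fun n : ℕ => ((n : ℝ) + a) ^ (-p)) := by
  have h := (Real.summable_one_div_nat_add_rpow a p).mpr hp
  refine h.congr fun n => ?_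
  rw [abs_of_pos (by positivity), one_div, ← Real.rpow_neg (by positivity)]

lemma lerch_exp_norm (α : ℝ) (n : ℕ) : ‖Complex.exp (2 * π * I * n * α)‖ = 1 := by
  have : (2 * (π : ℂ) * I * n * α) = ((2 * π * n * α : ℝ) : ℂ) * I := by
    push_cast; ring
  rw [this]
  simpa using Complex.norm_exp_ofReal_mul_I (2 * π * n * α)

/-- For `Re s > 1` and `c > 0`, the Lerch zeta series is differentiable in `c` with
`∂ζ(α,c,s)/∂c = -s·ζ(α,c,s+1)`. -/
theorem lerchZeta_hasDerivAt_c (α : ℝ) (s : ℂ) (hs : 1 < s.re) (c : ℝ) (hc : 0 < c) :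
    HasDerivAt (fun x : ℝ => ∑' n : ℕ, Complex.exp (2 * π * I * n * α) / ((n : ℂ) + x) ^ s)
      (-s * ∑' n : ℕ, Complex.exp (2 * π * I * n * α) / ((n : ℂ) + c) ^ (s + 1)) c := by
  set e : ℕ → ℂ := fun n => Complex.exp (2 * π * I * n * α) with he
  have hen : ∀ n : ℕ, ‖e n‖ = 1 := fun n => lerch_exp_norm α n
  -- rewrite division as cpow with negative exponent
  have hfun : ∀ x : ℝ, (fun n : ℕ => e n / ((n : ℂ) + x) ^ s)
      = fun n : ℕ => e n * ((n : ℂ) + x) ^ (-s) := by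
    intro x; funext n; rw [Complex.cpow_neg, div_eq_mul_inv]
  -- the derivative of each term
  have key : ∀ (n : ℕ) (x : ℝ), x ∈ Set.Ioi (c / 2) →
      HasDerivAt (fun x : ℝ => e n * ((n : ℂ) + x) ^ (-s))
        (e n * (-s * ((n : ℂ) + x) ^ (-s - 1))) x := by
    intro n x hx
    have hx0 : 0 < x := lt_of_le_of_lt (by positivity) hx
    have h0 : HasDerivAt (fun z : ℂ => (n : ℂ) + z) 1 (x : ℂ) := by
      simpa using (hasDerivAt_id (x : ℂ)).const_add (n : ℂ)
    have hmem : ((n : ℂ) + (x : ℝ)) ∈ Complex.slitPlane := by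
      refine Or.inl ?_
      simp only [Complex.add_re, Complex.natCast_re, Complex.ofReal_re]
      positivity
    have h1 : HasDerivAt (fun z : ℂ => ((n : ℂ) + z) ^ (-s))
        (-s * ((n : ℂ) + (x : ℝ)) ^ (-s - 1)) (x : ℂ) := by
      have := h0.cpow_const (c := -s) hmem
      simpa [neg_sub, sub_eq_add_neg] using this
    have h2 := (h1.comp_ofReal).const_mul (e n)
    simpa [mul_comm, mul_assoc, mul_left_comm] using h2
  -- bound on derivatives
  set u : ℕ → ℝ := fun n => ‖s‖ * ((n : ℝ) + c / 2) ^ (-(s.re + 1)) with hu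
  have hu_sum : Summable u :=
    (lerch_aux_summable (c / 2) (by positivity) (s.re + 1) (by linarith)).mul_left _
  have hbound : ∀ (n : ℕ) (x : ℝ), x ∈ Set.Ioi (c / 2) →
      ‖e n * (-s * ((n : ℂ) + x) ^ (-s - 1))‖ ≤ u n := by
    intro n x hx
    have hx0 : 0 < x := lt_of_le_of_lt (by positivity) hx
    have hnx : (0 : ℝ) < (n : ℝ) + x := by positivity
    have hcast : ((n : ℂ) + (x : ℝ)) = (((n : ℝ) + x : ℝ) : ℂ) := by push_cast; ring
    rw [norm_mul, hen, one_mul, norm_mul, norm_neg, hcast]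
    have habs : ‖((((n : ℝ) + x : ℝ)) : ℂ) ^ (-s - 1)‖ = ((n : ℝ) + x) ^ ((-s - 1).re) := by
      exact Complex.norm_cpow_eq_rpow_re_of_pos hnx _
    have hre : (-s - 1).re = -(s.re + 1) := by simp; ring
    rw [habs, hre, hu]
    have : ((n : ℝ) + x) ^ (-(s.re + 1)) ≤ ((n : ℝ) + c / 2) ^ (-(s.re + 1)) := by
      apply Real.rpow_le_rpow_of_nonpos (by positivity)
        (by linarith [le_of_lt (Set.mem_Ioi.mp hx)]) (by linarith)
    exact mul_le_mul_of_nonneg_left this (norm_nonneg s)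
  -- summability at c
  have hsum_c : Summable fun n : ℕ => e n * ((n : ℂ) + (c : ℝ)) ^ (-s) := by
    apply Summable.of_norm
    have : Summable (fun n : ℕ => ((n : ℝ) + c) ^ (-s.re)) :=
      lerch_aux_summable c hc s.re hs
    refine this.congr fun n => ?_
    have hnx : (0 : ℝ) < (n : ℝ) + c := by positivity
    have hcast : ((n : ℂ) + (c : ℝ)) = (((n : ℝ) + c : ℝ) : ℂ) := by push_cast; ring
    rw [norm_mul, hen n, one_mul, hcast,
      Complex.norm_cpow_eq_rpow_re_of_pos hnx]
    simp
  -- apply the differentiation theorem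
  have hmain := hasDerivAt_tsum_of_isPreconnected hu_sum isOpen_Ioi
    (isPreconnected_Ioi) key hbound (Set.mem_Ioi.mpr (by linarith)) hsum_c
    (Set.mem_Ioi.mpr (by linarith : c / 2 < c))
  have heq : (fun x : ℝ => ∑' n : ℕ, e n / ((n : ℂ) + x) ^ s)
      = fun x : ℝ => ∑' n : ℕ, e n * ((n : ℂ) + x) ^ (-s) := by
    funext x; exact congrArg tsum (hfun x)
  rw [heq]
  convert hmain using 1
  case e'_4 => rfl
  rw [← tsum_mul_left]
  congr 1; funext n
  simp only [he]
  rw [show (-s - 1 : ℂ) = -(s + 1) by ring, Complex.cpow_neg, div_eq_mul_inv]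
  ring
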